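/- Let G = (V,E) be a connected finite simple graph with n = |V|, let 𝒢 be the graph obtained from G by the subdivision-path-apex construction, and let c be a natural number. Then G contains an independent set of cardinality at least c if and only if 𝒢 contains a proper skew stalled subset of cardinality at least (2n+1)·|E| + c. -/

import Mathlib

/-- An empty vertex `v` is forced by the filled set `F` if some filled vertex `u ∈ F`
adjacent to `v` has `v` as its unique neighbor outside `F`. -/
def IsForced {W : Type*} (H : SimpleGraph W) (F : Set W) (v : W) : Prop :=
  v ∉ F ∧ ∃ u, u ∈ F ∧ H.Adj u v ∧ ∀ w, H.Adj u w → w ∉ F → w = v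

/-- An empty vertex `v` is skew forced by `F` if some vertex `u` (filled or not)
adjacent to `v` has `v` as its unique neighbor outside `F`. -/
def IsSkewForced {W : Type*} (H : SimpleGraph W) (F : Set W) (v : W) : Prop :=
  v ∉ F ∧ ∃ u, H.Adj u v ∧ ∀ w, H.Adj u w → w ∉ F → w = v

/-- `F` is stalled if no empty vertex is forced by `F`. -/
def Stalled {W : Type*} (H : SimpleGraph W) (F : Set W) : Prop :=
  ∀ v, ¬ IsForced H F v

/-- `F` is skew stalled if no empty vertex is skew forced by `F`. -/
def SkewStalled {W : Type*} (H : SimpleGraph W) (F : Set W) : Prop :=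
  ∀ v, ¬ IsSkewForced H F v

/-- A set of vertices is independent if its vertices are pairwise non-adjacent. -/
def IndepIn {W : Type*} (H : SimpleGraph W) (U : Set W) : Prop :=
  U.Pairwise fun a b => ¬ H.Adj a b

/-- Vertex set of the subdivision-path-apex construction: the vertices of `G`,
vertices `e^i` for each edge `e` and `0 ≤ i ≤ 2n`, and one apex vertex `ε`. -/
abbrev GVert {V : Type*} [Fintype V] (G : SimpleGraph V) : Type _ :=
  V ⊕ (G.edgeSet × Fin (2 * Fintype.card V + 1)) ⊕ Unit

/-- Generating relation: `v ~ e^0` when `v ∈ e`; `e^i ~ e^{i+1}`; `ε ~ e^0`. -/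
def gRel {V : Type*} [Fintype V] (G : SimpleGraph V) : GVert G → GVert G → Prop
  | Sum.inl v, Sum.inr (Sum.inl (e, i)) => i.val = 0 ∧ v ∈ (e : Sym2 V)
  | Sum.inr (Sum.inl (e, i)), Sum.inr (Sum.inl (e', j)) => e = e' ∧ i.val + 1 = j.val
  | Sum.inr (Sum.inr _), Sum.inr (Sum.inl (_, i)) => i.val = 0
  | _, _ => False

/-- The subdivision-path-apex construction `𝒢`. -/
def GG {V : Type*} [Fintype V] (G : SimpleGraph V) : SimpleGraph (GVert G) :=
  SimpleGraph.fromRel (gRel G)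

namespace SPA

variable {V : Type*} [Fintype V] {G : SimpleGraph V}

/-- path vertex -/
def pv (G : SimpleGraph V) (e : G.edgeSet) (i : Fin (2 * Fintype.card V + 1)) : GVert G :=
  Sum.inr (Sum.inl (e, i))

/-- apex vertex -/
def eps (G : SimpleGraph V) : GVert G := Sum.inr (Sum.inr ())

theorem edge_repr (e : G.edgeSet) : ∃ a b, G.Adj a b ∧ (e : Sym2 V) = s(a, b) := by
  obtain ⟨s, hs⟩ := e
  induction s using Sym2.ind with
  | _ a b => exact ⟨a, b, G.mem_edgeSet.mp hs, rfl⟩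

theorem adj_pv_pv (e e' : G.edgeSet) (i j : Fin _) :
    (GG G).Adj (pv G e i) (pv G e' j) ↔ e = e' ∧ (i.val + 1 = j.val ∨ j.val + 1 = i.val) := by
  simp only [GG, SimpleGraph.fromRel_adj, gRel, pv]
  constructor
  · rintro ⟨hne, (⟨rfl, h⟩ | ⟨rfl, h⟩)⟩ <;> simp_all
  · rintro ⟨rfl, (h | h)⟩
    · exact ⟨by simp [pv]; omega, Or.inl ⟨rfl, h⟩⟩
    · exact ⟨by simp [pv]; omega, Or.inr ⟨rfl, h⟩⟩

theorem adj_inl_pv (v : V) (e : G.edgeSet) (i : Fin _) :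
    (GG G).Adj (Sum.inl v) (pv G e i) ↔ i.val = 0 ∧ v ∈ (e : Sym2 V) := by
  simp only [GG, SimpleGraph.fromRel_adj, gRel, pv]
  constructor
  · rintro ⟨hne, (h | h)⟩
    · exact h
    · exact absurd h id
  · rintro ⟨h1, h2⟩
    exact ⟨by simp, Or.inl ⟨h1, h2⟩⟩

theorem adj_eps_pv (e : G.edgeSet) (i : Fin _) :
    (GG G).Adj (eps G) (pv G e i) ↔ i.val = 0 := by
  simp only [GG, SimpleGraph.fromRel_adj, gRel, pv, eps]
  constructor
  · rintro ⟨hne, (h | h)⟩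
    · exact h
    · exact absurd h id
  · rintro h1
    exact ⟨by simp, Or.inl h1⟩

/-- classification of neighbors of a path vertex -/
theorem adj_pv_iff (e : G.edgeSet) (i : Fin _) (w : GVert G) :
    (GG G).Adj (pv G e i) w ↔
      (i.val = 0 ∧ ((∃ v ∈ (e : Sym2 V), w = Sum.inl v) ∨ w = eps G)) ∨
      (∃ j : Fin _, (i.val + 1 = j.val ∨ j.val + 1 = i.val) ∧ w = pv G e j) := by
  constructor
  · intro h
    rcases w with v | p | u
    · left
      rw [(GG G).adj_comm, adj_inl_pv] at h
      exact ⟨h.1, Or.inl ⟨v, h.2, rfl⟩⟩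
    · obtain ⟨e', j⟩ := p
      rw [show (Sum.inr (Sum.inl (e', j)) : GVert G) = pv G e' j from rfl, adj_pv_pv] at h
      exact Or.inr ⟨j, h.2, by cases h.1; rfl⟩
    · left
      rw [(GG G).adj_comm, show (Sum.inr (Sum.inr u) : GVert G) = eps G from rfl,
        adj_eps_pv] at h
      exact ⟨h, Or.inr rfl⟩
  · rintro (⟨h0, (⟨v, hv, rfl⟩ | rfl)⟩ | ⟨j, hj, rfl⟩)
    · exact ((adj_inl_pv v e i).mpr ⟨h0, hv⟩).symm
    · exact ((adj_eps_pv e i).mpr h0).symm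
    · exact (adj_pv_pv e e i j).mpr ⟨rfl, hj⟩

/-- classification of neighbors of a `G`-vertex -/
theorem adj_inl_iff (v : V) (w : GVert G) :
    (GG G).Adj (Sum.inl v) w ↔
      ∃ (e : G.edgeSet) (i : Fin _), i.val = 0 ∧ v ∈ (e : Sym2 V) ∧ w = pv G e i := by
  constructor
  · intro h
    rcases w with x | p | u
    · simp only [GG, SimpleGraph.fromRel_adj, gRel] at h
      exact absurd h.2 (by simp)
    · obtain ⟨e, i⟩ := p
      rw [show (Sum.inr (Sum.inl (e, i)) : GVert G) = pv G e i from rfl, adj_inl_pv] at h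
      exact ⟨e, i, h.1, h.2, rfl⟩
    · simp only [GG, SimpleGraph.fromRel_adj, gRel] at h
      exact absurd h.2 (by simp)
  · rintro ⟨e, i, h0, hv, rfl⟩
    exact (adj_inl_pv v e i).mpr ⟨h0, hv⟩

theorem adj_eps_iff (w : GVert G) :
    (GG G).Adj (eps G) w ↔ ∃ (e : G.edgeSet) (i : Fin _), i.val = 0 ∧ w = pv G e i := by
  constructor
  · intro h
    rcases w with x | p | u
    · simp only [GG, SimpleGraph.fromRel_adj, gRel, eps] at h
      exact absurd h.2 (by simp)
    · obtain ⟨e, i⟩ := p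
      rw [show (Sum.inr (Sum.inl (e, i)) : GVert G) = pv G e i from rfl, adj_eps_pv] at h
      exact ⟨e, i, h, rfl⟩
    · simp only [GG, SimpleGraph.fromRel_adj, gRel, eps] at h
      rcases u; rcases h with ⟨h1, h2 | h2⟩ <;> simp_all
  · rintro ⟨e, i, h0, rfl⟩
    exact (adj_eps_pv e i).mpr h0

theorem stalled_elim {W : Type*} {H : SimpleGraph W} {S : Set W} (hS : SkewStalled H S)
    {u v : W} (hv : v ∉ S) (huv : H.Adj u v) : ∃ w, H.Adj u w ∧ w ∉ S ∧ w ≠ v := by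
  have h := hS v
  simp only [IsSkewForced] at h
  push_neg at h
  exact h hv u huv


section Path
variable {S : Set (GVert G)} (hS : SkewStalled (GG G) S)

include hS

/-- if the two neighbors of an interior path vertex differ in filledness, contradiction -/
theorem mid_unique (e : G.edgeSet) (a b m : Fin (2 * Fintype.card V + 1))
    (h1 : a.val + 1 = m.val) (h2 : m.val + 1 = b.val) :
    (pv G e a ∈ S ↔ pv G e b ∈ S) := by
  constructor
  · intro ha
    by_contra hb
    obtain ⟨w, hw, hwS, hwne⟩ := stalled_elim hS hb
      ((adj_pv_pv e e m b).mpr ⟨rfl, Or.inl h2⟩)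
    rcases (adj_pv_iff e m w).mp hw with ⟨h0, _⟩ | ⟨j, hj, rfl⟩
    · omega
    · rcases hj with hj | hj
      · exact hwne (by have : j = b := Fin.ext (by omega); rw [this])
      · have : j = a := Fin.ext (by omega)
        rw [this] at hwS; exact hwS ha
  · intro hb
    by_contra ha
    obtain ⟨w, hw, hwS, hwne⟩ := stalled_elim hS ha
      ((adj_pv_pv e e m a).mpr ⟨rfl, Or.inr h1⟩)
    rcases (adj_pv_iff e m w).mp hw with ⟨h0, _⟩ | ⟨j, hj, rfl⟩
    · omega
    · rcases hj with hj | hj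
      · have : j = b := Fin.ext (by omega)
        rw [this] at hwS; exact hwS hb
      · exact hwne (by have : j = a := Fin.ext (by omega); rw [this])

/-- the vertex `e^{2n-1}` is filled -/
theorem end_filled (e : G.edgeSet) (a : Fin (2 * Fintype.card V + 1))
    (ha : a.val + 1 = 2 * Fintype.card V) : pv G e a ∈ S := by
  by_contra h
  obtain ⟨w, hw, hwS, hwne⟩ := stalled_elim hS h
    ((adj_pv_pv e e ⟨2 * Fintype.card V, by omega⟩ a).mpr ⟨rfl, Or.inr ha⟩)
  rcases (adj_pv_iff e ⟨2 * Fintype.card V, by omega⟩ w).mp hw with ⟨h0, _⟩ | ⟨j, hj, rfl⟩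
  · simp at h0; omega
  · simp only at hj
    have hj' : j.val + 1 = 2 * Fintype.card V := by omega
    exact hwne (by have : j = a := Fin.ext (by omega); rw [this])

theorem odd_filled (e : G.edgeSet) (j : Fin (2 * Fintype.card V + 1)) (hj : Odd j.val) :
    pv G e j ∈ S := by
  have key : ∀ d : ℕ, ∀ j : Fin (2 * Fintype.card V + 1),
      j.val + 1 + 2 * d = 2 * Fintype.card V → pv G e j ∈ S := by
    intro d
    induction d with
    | zero => intro j hj; exact end_filled hS e j (by omega)
    | succ d ih =>
      intro j hj
      have h2 : j.val + 2 < 2 * Fintype.card V + 1 := by omega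
      have h1 : j.val + 1 < 2 * Fintype.card V + 1 := by omega
      have := mid_unique hS e j ⟨j.val + 2, h2⟩ ⟨j.val + 1, h1⟩ rfl rfl
      exact this.mpr (ih ⟨j.val + 2, h2⟩ (by simp; omega))
  obtain ⟨k, hk⟩ := hj
  have hjle : j.val < 2 * Fintype.card V + 1 := j.isLt
  exact key (Fintype.card V - 1 - k) j (by omega)

theorem even_chain (e : G.edgeSet) (j : Fin (2 * Fintype.card V + 1)) (hj : Even j.val) :
    (pv G e j ∈ S ↔ pv G e ⟨0, by omega⟩ ∈ S) := by
  have key : ∀ k : ℕ, ∀ j : Fin (2 * Fintype.card V + 1), j.val = 2 * k →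
      (pv G e j ∈ S ↔ pv G e ⟨0, by omega⟩ ∈ S) := by
    intro k
    induction k with
    | zero => intro j hj; rw [show j = ⟨0, by omega⟩ from Fin.ext (by show j.val = 0; omega)]
    | succ k ih =>
      intro j hj
      have hlt : j.val < 2 * Fintype.card V + 1 := j.isLt
      have h0 : 2 * k < 2 * Fintype.card V + 1 := by omega
      have h1 : 2 * k + 1 < 2 * Fintype.card V + 1 := by omega
      have step := mid_unique hS e ⟨2 * k, h0⟩ j ⟨2 * k + 1, h1⟩ rfl (by simp; omega)
      exact step.symm.trans (ih ⟨2 * k, h0⟩ rfl)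
  obtain ⟨k, hk⟩ := hj
  exact key k j (by omega)

end Path

theorem walk_prop {W : Type*} {H : SimpleGraph W} {P : W → Prop}
    (hstep : ∀ x y, H.Adj x y → P x → P y) {a b : W} (p : H.Walk a b) (ha : P a) : P b := by
  induction p with
  | nil => exact ha
  | cons h p ih => exact ih (hstep _ _ h ha)

/-- the set of all path vertices -/
def AP (G : SimpleGraph V) : Set (GVert G) :=
  Set.range (fun p : G.edgeSet × Fin (2 * Fintype.card V + 1) => Sum.inr (Sum.inl p))

theorem pv_mem_AP (e : G.edgeSet) (i : Fin _) : pv G e i ∈ AP G := ⟨(e, i), rfl⟩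

theorem inr_inl_injective :
    Function.Injective (fun p : G.edgeSet × Fin (2 * Fintype.card V + 1) =>
      (Sum.inr (Sum.inl p) : GVert G)) :=
  Sum.inr_injective.comp Sum.inl_injective

theorem card_AP : (AP G).ncard = (2 * Fintype.card V + 1) * G.edgeSet.ncard := by
  rw [AP, ← Set.image_univ, Set.ncard_image_of_injective _ inr_inl_injective, Set.ncard_univ,
    Nat.card_prod, Nat.card_coe_set_eq, Nat.card_eq_fintype_card, Fintype.card_fin, mul_comm]

theorem card_GVert :
    Nat.card (GVert G) = Fintype.card V + ((2 * Fintype.card V + 1) * G.edgeSet.ncard + 1) := by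
  rw [Nat.card_sum, Nat.card_sum, Nat.card_prod, Nat.card_eq_fintype_card (α := V),
    Nat.card_eq_fintype_card (α := Fin _), Fintype.card_fin, Nat.card_coe_set_eq,
    Nat.card_unique, mul_comm]

theorem many_empty {S : Set (GVert G)} (hS : SkewStalled (GG G) S) (e : G.edgeSet)
    (h0 : pv G e ⟨0, by omega⟩ ∉ S) : Fintype.card V + 1 ≤ Sᶜ.ncard := by
  set g : Fin (Fintype.card V + 1) → GVert G := fun k => pv G e ⟨2 * k.val, by omega⟩ with hg
  have hginj : Function.Injective g := by
    intro a b h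
    simp only [hg, pv, Sum.inr.injEq, Sum.inl.injEq, Prod.mk.injEq, Fin.mk.injEq] at h
    exact Fin.ext (by omega)
  have hsub : Set.range g ⊆ Sᶜ := by
    rintro x ⟨k, rfl⟩
    intro hx
    exact h0 ((even_chain hS e ⟨2 * k.val, by omega⟩ ⟨k.val, show 2 * k.val = k.val + k.val by omega⟩).mp hx)
  calc Fintype.card V + 1 = (Set.range g).ncard := by
        rw [← Set.image_univ, Set.ncard_image_of_injective _ hginj, Set.ncard_univ,
          Nat.card_eq_fintype_card, Fintype.card_fin]
      _ ≤ Sᶜ.ncard := Set.ncard_le_ncard hsub (Set.toFinite _)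

end SPA

/-- `G` has an independent set of cardinality at least `c` iff `𝒢` has a
proper skew stalled subset of cardinality at least `(2n+1)·|E| + c`. -/
theorem indep_iff_proper_skewStalled {V : Type*} [Fintype V] (G : SimpleGraph V)
    (hG : G.Connected) (c : ℕ) :
    (∃ U : Set V, IndepIn G U ∧ c ≤ U.ncard) ↔
      ∃ S : Set (GVert G), S ≠ Set.univ ∧ SkewStalled (GG G) S ∧
        (2 * Fintype.card V + 1) * G.edgeSet.ncard + c ≤ S.ncard := by
  classical
  constructor
  · rintro ⟨U, hU, hUc⟩
    have heps : SPA.eps G ∉ (Sum.inl '' U) ∪ SPA.AP G := by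
      rintro (⟨u, -, h⟩ | ⟨p, h⟩) <;> simp [SPA.eps] at h
    refine ⟨(Sum.inl '' U) ∪ SPA.AP G, ?_, ?_, ?_⟩
    · intro h
      exact heps (h ▸ Set.mem_univ _)
    · intro v hv
      simp only [IsSkewForced] at hv
      obtain ⟨hvS, u, huv, hforce⟩ := hv
      rcases u with a | ⟨e, i⟩ | t
      · obtain ⟨e, i, h0, hmem, rfl⟩ := (SPA.adj_inl_iff a v).mp huv
        exact hvS (Or.inr (SPA.pv_mem_AP e i))
      · rcases (SPA.adj_pv_iff e i v).mp huv with ⟨h0, (⟨x, hx, rfl⟩ | rfl)⟩ | ⟨j, hj, rfl⟩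
        · have := hforce (SPA.eps G)
            ((SPA.adj_pv_iff e i _).mpr (Or.inl ⟨h0, Or.inr rfl⟩)) heps
          simp [SPA.eps] at this
        · obtain ⟨a, b, hab, hrep⟩ := SPA.edge_repr e
          have hamem : a ∈ (e : Sym2 V) := by rw [hrep]; simp
          have hbmem : b ∈ (e : Sym2 V) := by rw [hrep]; simp
          have key : ∀ x : V, x ∈ (e : Sym2 V) → x ∈ U := by
            intro x hxmem
            by_contra hxU
            have hxS : Sum.inl x ∉ (Sum.inl '' U) ∪ SPA.AP G := by
              rintro (⟨u', hu', hu2⟩ | ⟨p, hp⟩)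
              · exact hxU (Sum.inl_injective hu2 ▸ hu')
              · simp at hp
            have := hforce (Sum.inl x)
              ((SPA.adj_pv_iff e i _).mpr (Or.inl ⟨h0, Or.inl ⟨x, hxmem, rfl⟩⟩)) hxS
            simp [SPA.eps] at this
          exact hU (key a hamem) (key b hbmem) hab.ne hab
        · exact hvS (Or.inr (SPA.pv_mem_AP e j))
      · rcases t
        obtain ⟨e, i, h0, rfl⟩ := (SPA.adj_eps_iff v).mp huv
        exact hvS (Or.inr (SPA.pv_mem_AP e i))
    · have hdisj : Disjoint (Sum.inl '' U) (SPA.AP G) := by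
        rw [Set.disjoint_left]
        rintro x ⟨u, -, rfl⟩ ⟨p, h⟩
        exact absurd h (by simp)
      rw [Set.ncard_union_eq hdisj, Set.ncard_image_of_injective _ Sum.inl_injective,
        SPA.card_AP]
      omega
  · rintro ⟨S, hproper, hS, hbig⟩
    rcases Nat.eq_zero_or_pos c with rfl | hc
    · exact ⟨∅, by simp [IndepIn], by simp⟩
    · have htotal := Set.ncard_add_ncard_compl S
      rw [SPA.card_GVert] at htotal
      have hfull : ∀ (e : G.edgeSet) (i : Fin (2 * Fintype.card V + 1)), SPA.pv G e i ∈ S := by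
        intro e i
        have h0 : SPA.pv G e ⟨0, by omega⟩ ∈ S := by
          by_contra h0
          have := SPA.many_empty hS e h0
          omega
        rcases Nat.even_or_odd i.val with he | ho
        · exact (SPA.even_chain hS e i he).mpr h0
        · exact SPA.odd_filled hS e i ho
      by_cases heps : SPA.eps G ∈ S
      · obtain ⟨x, hx⟩ : ∃ x, x ∉ S := by
          by_contra h
          push_neg at h
          exact hproper (Set.eq_univ_iff_forall.mpr h)
        obtain ⟨v, rfl⟩ : ∃ v, x = Sum.inl v := by
          rcases x with v | ⟨e, i⟩ | t
          · exact ⟨v, rfl⟩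
          · exact absurd (hfull e i) hx
          · rcases t; exact absurd heps hx
        have hprop : ∀ a b : V, G.Adj a b → Sum.inl a ∉ S → Sum.inl b ∉ S := by
          intro a b hab ha hb
          set e : G.edgeSet := ⟨s(a, b), hab⟩ with he
          obtain ⟨w, hw, hwS, hwne⟩ := SPA.stalled_elim hS ha
            ((SPA.adj_pv_iff e ⟨0, by omega⟩ (Sum.inl a)).mpr
              (Or.inl ⟨rfl, Or.inl ⟨a, by simp [he], rfl⟩⟩))
          rcases (SPA.adj_pv_iff e ⟨0, by omega⟩ w).mp hw with
            ⟨h0, (⟨x', hx', rfl⟩ | rfl)⟩ | ⟨j, hj, rfl⟩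
          · simp [he] at hx'
            rcases hx' with rfl | rfl
            · exact hwne rfl
            · exact hwS hb
          · exact hwS heps
          · exact hwS (hfull e j)
        have hall : ∀ w, Sum.inl w ∉ S := by
          intro w
          obtain ⟨p⟩ := hG.preconnected v w
          exact SPA.walk_prop (P := fun z => Sum.inl z ∉ S) hprop p hx
        have hc2 : Fintype.card V ≤ Sᶜ.ncard := by
          have h1 : (Set.range (Sum.inl : V → GVert G)).ncard = Fintype.card V := by
            rw [← Set.image_univ, Set.ncard_image_of_injective _ Sum.inl_injective,
              Set.ncard_univ, Nat.card_eq_fintype_card]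
          rw [← h1]
          refine Set.ncard_le_ncard ?_ (Set.toFinite _)
          rintro _ ⟨w, rfl⟩
          exact hall w
        refine ⟨{v}, ?_, ?_⟩
        · exact Set.pairwise_singleton _ _
        · rw [Set.ncard_singleton]
          omega
      · set U : Set V := {v | Sum.inl v ∈ S} with hUdef
        have hSU : S = (Sum.inl '' U) ∪ SPA.AP G := by
          ext x
          constructor
          · intro hxS
            rcases x with v | ⟨e, i⟩ | t
            · exact Or.inl ⟨v, hxS, rfl⟩
            · exact Or.inr (SPA.pv_mem_AP e i)
            · rcases t; exact absurd hxS heps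
          · rintro (⟨u, hu, rfl⟩ | ⟨p, rfl⟩)
            · exact hu
            · exact hfull p.1 p.2
        have hind : IndepIn G U := by
          intro a ha b hb hne hab
          set e : G.edgeSet := ⟨s(a, b), hab⟩ with he
          obtain ⟨w, hw, hwS, hwne⟩ := SPA.stalled_elim hS heps
            (((SPA.adj_eps_pv e ⟨0, by omega⟩).mpr rfl).symm)
          rcases (SPA.adj_pv_iff e ⟨0, by omega⟩ w).mp hw with
            ⟨h0, (⟨x', hx', rfl⟩ | rfl)⟩ | ⟨j, hj, rfl⟩
          · simp [he] at hx'
            rcases hx' with rfl | rfl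
            · exact hwS ha
            · exact hwS hb
          · exact hwne rfl
          · exact hwS (hfull e j)
        have hdisj : Disjoint (Sum.inl '' U) (SPA.AP G) := by
          rw [Set.disjoint_left]
          rintro x ⟨u, -, rfl⟩ ⟨p, h⟩
          exact absurd h (by simp)
        refine ⟨U, hind, ?_⟩
        have hcard : S.ncard = U.ncard + (2 * Fintype.card V + 1) * G.edgeSet.ncard := by
          rw [hSU, Set.ncard_union_eq hdisj, Set.ncard_image_of_injective _ Sum.inl_injective,
            SPA.card_AP]
        omega
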